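/- Let m be a positive integer and R a subset of {0,...,m-1}. Suppose an R-congruency-constrained system Tx ≤ b, γ^T x ∈ R (mod m), x ∈ Z^n with T totally unimodular has a feasible solution y, and let x_0 ∈ Z^n satisfy T x_0 ≤ b. If for every d ∈ Z^n TU-appendable to T one can write y - x_0 = ∑_{i=1}^n λ_i y^i with λ_i ∈ Z_{≥0}, each y^i elementary w.r.t. T, and all partial combinations x_0 + ∑ μ_i y^i (0 ≤ μ_i ≤ λ_i) feasible for Tx ≤ b, then there exists a feasible solution ỹ of the congruency-constrained system with ∑ of the used coefficients at most m - |R|, and hence d^T(ỹ - x_0) ≤ m - |R| for every TU-appendable d. -/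

import Mathlib

/-- Core pigeonhole lemma: from a list of steps in `ZMod m` whose total (from `c`)
lands in `R'`, one can pick a sublist of length at most `m - R'.card` also landing in `R'`. -/
lemma core_list (m : ℕ) (hm : 0 < m) (R' : Finset (ZMod m)) :
    ∀ N : ℕ, ∀ L : List (ZMod m), L.length = N → ∀ c : ZMod m,
      c + L.sum ∈ R' → ∃ L' : List (ZMod m),
        L'.Sublist L ∧ L'.length ≤ m - R'.card ∧ c + L'.sum ∈ R' := by
  haveI : NeZero m := ⟨hm.ne'⟩
  intro N
  induction N using Nat.strong_induction_on with
  | _ N ih =>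
  intro L hLen c hsum
  by_cases hc : c ∈ R'
  · exact ⟨[], List.nil_sublist L, by simp, by simpa using hc⟩
  by_cases hrep : ∃ a b : ℕ, a < b ∧ b ≤ N ∧ (L.take a).sum = (L.take b).sum
  · obtain ⟨a, b, hab, hbN, heq⟩ := hrep
    set L' : List (ZMod m) := L.take a ++ L.drop b with hL'
    have hsub : L'.Sublist L := by
      conv_rhs => rw [← List.take_append_drop a L]
      refine List.Sublist.append_left ?_ _
      have : L.drop b = (L.drop a).drop (b - a) := by
        rw [List.drop_drop]; congr 1; omega
      rw [this]
      exact List.drop_sublist _ _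
    have hlen : L'.length < N := by
      have : L'.length = a + (N - b) := by
        simp [hL', List.length_take, List.length_drop, hLen,
          Nat.min_eq_left (le_trans hab.le hbN)]
      omega
    have hsum' : c + L'.sum = c + L.sum := by
      have : L.sum = (L.take b).sum + (L.drop b).sum := by
        conv_lhs => rw [← List.take_append_drop b L]
        rw [List.sum_append]
      rw [hL', List.sum_append, heq, this]
    obtain ⟨L'', h1, h2, h3⟩ := ih _ hlen L' rfl c (by rw [hsum']; exact hsum)
    exact ⟨L'', h1.trans hsub, h2, h3⟩
  · push_neg at hrep
    have hinj : ∀ a b : ℕ, a ≤ N → b ≤ N →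
        (L.take a).sum = (L.take b).sum → a = b := by
      intro a b ha hb h
      rcases lt_trichotomy a b with h' | h' | h'
      · exact absurd h (hrep a b h' hb)
      · exact h'
      · exact absurd h.symm (hrep b a h' ha)
    have hex : ∃ t, t ≤ N ∧ c + (L.take t).sum ∈ R' :=
      ⟨N, le_refl N, by rwa [← hLen, List.take_length]⟩
    classical
    set t := Nat.find hex with ht
    obtain ⟨htN, htR⟩ := Nat.find_spec hex
    have hmin : ∀ s < t, ¬(s ≤ N ∧ c + (L.take s).sum ∈ R') := fun s hs => Nat.find_min hex hs
    -- all partial sums before t avoid R' and are pairwise distinct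
    have hcard : t ≤ m - R'.card := by
      have hmaps : ∀ s ∈ Finset.range t, c + (L.take s).sum ∈ Finset.univ \ R' := by
        intro s hs
        simp only [Finset.mem_range] at hs
        simp only [Finset.mem_sdiff, Finset.mem_univ, true_and]
        intro hmem
        exact hmin s hs ⟨le_trans hs.le htN, hmem⟩
      have : (Finset.range t).card ≤ (Finset.univ \ R').card := by
        apply Finset.card_le_card_of_injOn _ hmaps
        intro a ha b hb h
        simp only [Finset.coe_range, Set.mem_Iio] at ha hb
        exact hinj a b (le_trans ha.le htN) (le_trans hb.le htN) (by simpa using h)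
      simpa [Finset.card_sdiff_of_subset (Finset.subset_univ R'), ZMod.card] using this
    exact ⟨L.take t, List.take_sublist _ _, by
      simpa [List.length_take, hLen] using le_trans (Nat.min_le_left t N) hcard, htR⟩

lemma sum_map_eq_sum_count {n : ℕ} {M : Type*} [AddCommMonoid M] (g : Fin n → M) :
    ∀ l : List (Fin n), (l.map g).sum = ∑ i, (l.count i) • g i := by
  intro l
  induction l with
  | nil => simp
  | cons a l ihl =>
    simp only [List.map_cons, List.sum_cons, ihl, List.count_cons, add_smul,
      Finset.sum_add_distrib]
    rw [add_comm]
    congr 1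
    simp [apply_ite]

lemma count_flatMap_replicate {n : ℕ} (lam : Fin n → ℕ) (i : Fin n) :
    ((List.finRange n).flatMap fun j => List.replicate (lam j) j).count i = lam i := by
  rw [List.count_flatMap]
  have : (List.map (List.count i ∘ fun j => List.replicate (lam j) j) (List.finRange n)).sum
      = ∑ j : Fin n, if j = i then lam j else 0 := by
    rw [Fin.sum_univ_def]
    congr 1
    apply List.map_congr_left
    intro j _
    simp [List.count_replicate]
  rw [this, Finset.sum_ite_eq' Finset.univ i lam]
  simp

lemma key_zmod (m : ℕ) (hm : 0 < m) (R' : Finset (ZMod m)) {n : ℕ}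
    (g : Fin n → ZMod m) (lam : Fin n → ℕ) (c : ZMod m)
    (h : c + ∑ i, lam i • g i ∈ R') :
    ∃ μ : Fin n → ℕ, (∀ i, μ i ≤ lam i) ∧ (∑ i, μ i) ≤ m - R'.card ∧
      c + ∑ i, μ i • g i ∈ R' := by
  classical
  set Lidx : List (Fin n) := (List.finRange n).flatMap fun j => List.replicate (lam j) j
    with hLidx
  have hcount : ∀ i, Lidx.count i = lam i := count_flatMap_replicate lam
  have hsum : (Lidx.map g).sum = ∑ i, lam i • g i := by
    rw [sum_map_eq_sum_count]
    exact Finset.sum_congr rfl fun i _ => by rw [hcount]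
  obtain ⟨L', hsub, hlen, hmem⟩ := core_list m hm R' (Lidx.map g).length (Lidx.map g) rfl c
    (by rwa [hsum])
  obtain ⟨Lidx', hsub', rfl⟩ := List.sublist_map_iff.mp hsub
  refine ⟨fun i => Lidx'.count i, fun i => (hsub'.count_le i).trans_eq (hcount i), ?_, ?_⟩
  · have hlength : ∑ i, Lidx'.count i = Lidx'.length := by
      have := sum_map_eq_sum_count (fun _ : Fin n => (1 : ℕ)) Lidx'
      simpa using this.symm
    rw [hlength]
    simpa using hlen
  · rwa [← sum_map_eq_sum_count]

lemma dot_sum_smul {n : ℕ} (γ : Fin n → ℤ) (coef : Fin n → ℤ) (ys : Fin n → Fin n → ℤ) :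
    dotProduct γ (∑ i, coef i • ys i) = ∑ i, coef i * dotProduct γ (ys i) := by
  simp only [dotProduct, Finset.sum_apply, Pi.smul_apply, smul_eq_mul, Finset.mul_sum]
  rw [Finset.sum_comm]
  exact Finset.sum_congr rfl fun i _ => Finset.sum_congr rfl fun j _ => by ring

/-- `d` is TU-appendable to `T`. -/
def TUAppendable {k n : ℕ} (T : Matrix (Fin k) (Fin n) ℤ) (d : Fin n → ℤ) : Prop :=
  (Matrix.fromRows T (Matrix.of fun (_ : Unit) (j : Fin n) => d j)).IsTotallyUnimodular

/-- `x` is elementary with respect to `T`. -/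
def ElementaryWrt {k n : ℕ} (T : Matrix (Fin k) (Fin n) ℤ) (x : Fin n → ℤ) : Prop :=
  ∀ d : Fin n → ℤ, TUAppendable T d → dotProduct d x ∈ ({-1, 0, 1} : Set ℤ)

/-- Given a feasible solution `y` of the `R`-congruency-constrained TU system
and a solution `x₀` of its relaxation, together with a decomposition
`y - x₀ = ∑ λᵢ yⁱ` into elementary vectors whose partial combinations remain feasible for
the relaxation, there is a choice of coefficients `μᵢ ≤ λᵢ` with `∑ μᵢ ≤ m - |R|` so that
`ỹ = x₀ + ∑ μᵢ yⁱ` is feasible for the congruency-constrained system; in particular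
`dᵀ(ỹ - x₀) ≤ m - |R|` for every TU-appendable `d`. -/
theorem stmt10 (k n : ℕ) (T : Matrix (Fin k) (Fin n) ℤ) (hT : T.IsTotallyUnimodular)
    (b : Fin k → ℤ) (γ : Fin n → ℤ) (m : ℕ) (hm : 0 < m)
    (R : Finset ℕ) (hR : ∀ ρ ∈ R, ρ < m)
    (y x₀ : Fin n → ℤ)
    (hy : T.mulVec y ≤ b)
    (hyR : ∃ ρ ∈ R, dotProduct γ y ≡ (ρ : ℤ) [ZMOD (m : ℤ)])
    (hx₀ : T.mulVec x₀ ≤ b)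
    (ys : Fin n → (Fin n → ℤ)) (lam : Fin n → ℕ)
    (hdecomp : y - x₀ = ∑ i, (lam i : ℤ) • ys i)
    (helem : ∀ i, ElementaryWrt T (ys i))
    (hfeas : ∀ μ : Fin n → ℕ, (∀ i, μ i ≤ lam i) →
      T.mulVec (x₀ + ∑ i, (μ i : ℤ) • ys i) ≤ b) :
    ∃ μ : Fin n → ℕ, (∀ i, μ i ≤ lam i) ∧ (∑ i, μ i) ≤ m - R.card ∧
      T.mulVec (x₀ + ∑ i, (μ i : ℤ) • ys i) ≤ b ∧
      (∃ ρ ∈ R, dotProduct γ (x₀ + ∑ i, (μ i : ℤ) • ys i) ≡ (ρ : ℤ) [ZMOD (m : ℤ)]) ∧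
      (∀ d : Fin n → ℤ, TUAppendable T d →
        dotProduct d ((x₀ + ∑ i, (μ i : ℤ) • ys i) - x₀) ≤ (m : ℤ) - R.card) := by
  classical
  haveI : NeZero m := ⟨hm.ne'⟩
  -- cardinality facts
  have hcard : R.card ≤ m := by
    calc R.card ≤ (Finset.range m).card :=
          Finset.card_le_card (fun ρ hρ => Finset.mem_range.mpr (hR ρ hρ))
      _ = m := Finset.card_range m
  set R' : Finset (ZMod m) := R.image (Nat.cast : ℕ → ZMod m) with hR'
  have hR'card : R'.card = R.card := by
    apply Finset.card_image_of_injOn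
    intro a ha b hb hab
    have := congrArg ZMod.val hab
    rwa [ZMod.val_cast_of_lt (hR a ha), ZMod.val_cast_of_lt (hR b hb)] at this
  -- set up ZMod data
  set g : Fin n → ZMod m := fun i => ((dotProduct γ (ys i) : ℤ) : ZMod m) with hg
  set c : ZMod m := ((dotProduct γ x₀ : ℤ) : ZMod m) with hc
  have hdot : dotProduct γ y
      = dotProduct γ x₀ + ∑ i, (lam i : ℤ) * dotProduct γ (ys i) := by
    have h1 : dotProduct γ (y - x₀)
        = ∑ i, (lam i : ℤ) * dotProduct γ (ys i) := by
      rw [hdecomp, dot_sum_smul]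
    rw [dotProduct_sub] at h1
    linarith
  have castsum : ∀ ν : Fin n → ℕ,
      ((dotProduct γ x₀ + ∑ i, (ν i : ℤ) * dotProduct γ (ys i) : ℤ) : ZMod m)
        = c + ∑ i, ν i • g i := by
    intro ν
    push_cast
    rw [hc]
    congr 1
    rw [hg]
    refine Finset.sum_congr rfl fun i _ => ?_
    simp [nsmul_eq_mul]
  have hmem : c + ∑ i, lam i • g i ∈ R' := by
    obtain ⟨ρ, hρR, hρ⟩ := hyR
    have hcast : ((dotProduct γ y : ℤ) : ZMod m) = ((ρ : ℤ) : ZMod m) :=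
      (ZMod.intCast_eq_intCast_iff _ _ _).mpr hρ
    have : c + ∑ i, lam i • g i = ((dotProduct γ y : ℤ) : ZMod m) := by
      rw [hdot]; exact (castsum lam).symm
    rw [this, hcast, Int.cast_natCast]
    exact Finset.mem_image_of_mem _ hρR
  obtain ⟨μ, hμle, hμsum, hμmem⟩ := key_zmod m hm R' g lam c hmem
  refine ⟨μ, hμle, by rwa [hR'card] at hμsum, hfeas μ hμle, ?_, ?_⟩
  · -- congruency
    have hdot' : dotProduct γ (x₀ + ∑ i, (μ i : ℤ) • ys i)
        = dotProduct γ x₀ + ∑ i, (μ i : ℤ) * dotProduct γ (ys i) := by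
      rw [dotProduct_add, dot_sum_smul]
    obtain ⟨ρ, hρR, hρeq⟩ : ∃ ρ ∈ R, (ρ : ZMod m) = c + ∑ i, μ i • g i := by
      simpa [hR'] using hμmem
    refine ⟨ρ, hρR, ?_⟩
    rw [← ZMod.intCast_eq_intCast_iff]
    rw [hdot', castsum μ, ← hρeq, Int.cast_natCast]
  · -- the bound for TU-appendable d
    intro d hd
    rw [add_sub_cancel_left]
    have hμsum' : ∑ i, μ i ≤ m - R.card := by rwa [hR'card] at hμsum
    have hb1 : ∀ i, (μ i : ℤ) * dotProduct d (ys i) ≤ (μ i : ℤ) := by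
      intro i
      have hmem3 := helem i d hd
      simp only [Set.mem_insert_iff, Set.mem_singleton_iff] at hmem3
      have h1 : dotProduct d (ys i) ≤ 1 := by
        rcases hmem3 with h | h | h <;> rw [h] <;> norm_num
      calc (μ i : ℤ) * dotProduct d (ys i) ≤ (μ i : ℤ) * 1 :=
            mul_le_mul_of_nonneg_left h1 (by positivity)
        _ = (μ i : ℤ) := mul_one _
    calc dotProduct d (∑ i, (μ i : ℤ) • ys i)
        = ∑ i, (μ i : ℤ) * dotProduct d (ys i) := dot_sum_smul d _ ys
      _ ≤ ∑ i, (μ i : ℤ) := Finset.sum_le_sum fun i _ => hb1 i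
      _ = ((∑ i, μ i : ℕ) : ℤ) := by push_cast; rfl
      _ ≤ ((m - R.card : ℕ) : ℤ) := by exact_mod_cast hμsum'
      _ = (m : ℤ) - R.card := by rw [Nat.cast_sub hcard]
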